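/- Let n ≥ 1 be an integer and ω ∈ [0, 1 − 2^{−n}], and set t = (1−ω)^{1/n} (so t ∈ [1/2, 1]). For every s : Fin n → ℝ with s_i ∈ [1/2, 1] for all i and Π_i s_i ≥ 1−ω, one has Π_i (1/2 + √(s_i(1−s_i))) ≤ (1/2 + √(t(1−t)))^n, with equality when s_i = t for all i. Consequently the maximal success probability of fully separable preparations in the n-party distributed discrimination game equals pSep(ω,n) (Result 2). -/

import Mathlib

open Finset

noncomputable def qq (x : ℝ) : ℝ := Real.sqrt (x * (1 - x))

lemma qq_nonneg (x : ℝ) : 0 ≤ qq x := Real.sqrt_nonneg _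

lemma qq_anti {a b : ℝ} (ha : 1/2 ≤ a) (hab : a ≤ b) (hb : b ≤ 1) : qq b ≤ qq a :=
  Real.sqrt_le_sqrt (by nlinarith)

lemma qq_pos {a : ℝ} (ha : 0 < a) (hb : a < 1) : 0 < qq a :=
  Real.sqrt_pos.2 (by nlinarith)

lemma key1 {a b : ℝ} (ha : 1/2 ≤ a) (hab : a ≤ b) (hb : b ≤ 1) :
    a*(2*a-1) * (qq b * (1 + 2*qq b)) ≤ b*(2*b-1) * (qq a * (1 + 2*qq a)) := by
  have h1 : qq b ≤ qq a := qq_anti ha hab hb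
  have h2 : 0 ≤ qq b := qq_nonneg b
  have h3 : 0 ≤ a*(2*a-1) := by nlinarith
  have h4 : a*(2*a-1) ≤ b*(2*b-1) := by nlinarith
  have h5 : qq b * (1+2*qq b) ≤ qq a * (1+2*qq a) := by nlinarith
  exact mul_le_mul h4 h5 (by nlinarith) (by nlinarith)

lemma hasDeriv_F (β : ℝ) {x : ℝ} (hx1 : 1/2 < x) (hx2 : x < 1) :
    HasDerivAt (fun y => (1/2 + Real.sqrt (y*(1-y))) * y ^ β)
      ((1-2*x)/(2*Real.sqrt (x*(1-x))) * x ^ β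
        + (1/2 + Real.sqrt (x*(1-x))) * (β * x ^ (β-1))) x := by
  have hpos : 0 < x*(1-x) := by nlinarith
  have h1 : HasDerivAt (fun y : ℝ => y*(1-y)) (1-2*x) x := by
    have := (hasDerivAt_id x).mul ((hasDerivAt_const x (1:ℝ)).sub (hasDerivAt_id x))
    refine this.congr_deriv ?_; show 1 * (1 - x) + x * (0 - 1) = 1 - 2*x; ring
  have h2 : HasDerivAt (fun y => Real.sqrt (y*(1-y))) ((1-2*x)/(2*Real.sqrt (x*(1-x)))) x := by
    have := (Real.hasDerivAt_sqrt (ne_of_gt hpos)).comp x h1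
    refine this.congr_deriv ?_
    ring
  have h3 : HasDerivAt (fun y => 1/2 + Real.sqrt (y*(1-y)))
      ((1-2*x)/(2*Real.sqrt (x*(1-x)))) x := by
    exact h2.const_add (1/2)
  have h4 : HasDerivAt (fun y : ℝ => y ^ β) (β * x ^ (β-1)) x :=
    Real.hasDerivAt_rpow_const (Or.inl (by positivity))
  exact h3.mul h4

noncomputable def bet (t : ℝ) : ℝ := t*(2*t-1) / (qq t * (1 + 2*qq t))

lemma bet_nonneg {t : ℝ} (ht1 : 1/2 ≤ t) : 0 ≤ bet t := by
  apply div_nonneg (by nlinarith)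
  have := qq_nonneg t
  nlinarith

lemma onevar {t : ℝ} (ht1 : 1/2 ≤ t) (ht2 : t < 1) {s : ℝ} (hs1 : 1/2 ≤ s) (hs2 : s ≤ 1) :
    (1/2 + Real.sqrt (s*(1-s))) * s ^ (bet t) ≤ (1/2 + Real.sqrt (t*(1-t))) * t ^ (bet t) := by
  set B := bet t with hBdef
  have hB : 0 ≤ B := bet_nonneg ht1
  have hqt : 0 < qq t := qq_pos (by linarith) ht2
  have hDt : 0 < qq t * (1 + 2*qq t) := by nlinarith
  set F : ℝ → ℝ := fun y => (1/2 + Real.sqrt (y*(1-y))) * y ^ B with hF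
  have hcont : ∀ a b : ℝ, ContinuousOn F (Set.Icc a b) := by
    intro a b
    apply ContinuousOn.mul
    · exact (continuous_const.add ((Real.continuous_sqrt).comp
        (continuous_id.mul (continuous_const.sub continuous_id)))).continuousOn
    · exact fun x _ => (continuousAt_id.rpow_const (Or.inr hB)).continuousWithinAt
  -- the bracket sign
  have hbr : ∀ x : ℝ, 1/2 < x → x < 1 →
      deriv F x = x ^ (B-1) * (x*(1-2*x)/(2*qq x) + (1/2 + qq x)*B) := by
    intro x hx1 hx2
    have hx0 : (0:ℝ) < x := by linarith
    have hd := hasDeriv_F B hx1 hx2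
    rw [hd.deriv]
    have hxB : x ^ B = x ^ (B-1) * x := by
      rw [← Real.rpow_add_one (ne_of_gt hx0) (B-1)]; ring_nf
    rw [hxB]
    show (1-2*x)/(2*qq x) * (x ^ (B-1) * x) + (1/2 + qq x) * (B * x ^ (B-1)) = _
    ring
  have hmono : MonotoneOn F (Set.Icc (1/2) t) := by
    apply monotoneOn_of_deriv_nonneg (convex_Icc _ _) (hcont _ _)
    · intro x hx
      rw [interior_Icc] at hx
      exact (hasDeriv_F B hx.1 (lt_of_lt_of_le hx.2 ht2.le)).differentiableAt.differentiableWithinAt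
    · intro x hx
      rw [interior_Icc] at hx
      have hx1 : 1/2 < x := hx.1
      have hx2 : x < 1 := lt_of_lt_of_le hx.2 ht2.le
      rw [hbr x hx1 hx2]
      have hqx : 0 < qq x := qq_pos (by linarith) hx2
      have hkey := key1 hx1.le hx.2.le ht2.le
      have hb1 : x*(2*x-1) ≤ B * (qq x * (1+2*qq x)) := by
        rw [hBdef, bet, div_mul_eq_mul_div, le_div_iff₀ hDt]
        nlinarith [hkey]
      have hb2 : 0 ≤ x*(1-2*x)/(2*qq x) + (1/2 + qq x)*B := by
        have h3 : x*(2*x-1)/(2*qq x) ≤ (1/2 + qq x)*B := by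
          rw [div_le_iff₀ (by positivity)]
          nlinarith [hb1]
        have h4 : x*(1-2*x)/(2*qq x) = -(x*(2*x-1)/(2*qq x)) := by ring
        rw [h4]; linarith
      positivity
  have hanti : AntitoneOn F (Set.Icc t 1) := by
    apply antitoneOn_of_deriv_nonpos (convex_Icc _ _) (hcont _ _)
    · intro x hx
      rw [interior_Icc] at hx
      exact (hasDeriv_F B (lt_of_le_of_lt ht1 hx.1) hx.2).differentiableAt.differentiableWithinAt
    · intro x hx
      rw [interior_Icc] at hx
      have hx1 : 1/2 < x := lt_of_le_of_lt ht1 hx.1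
      have hx2 : x < 1 := hx.2
      rw [hbr x hx1 hx2]
      have hqx : 0 < qq x := qq_pos (by linarith) hx2
      have hkey := key1 ht1 hx.1.le hx2.le
      have hb1 : B * (qq x * (1+2*qq x)) ≤ x*(2*x-1) := by
        rw [hBdef, bet, div_mul_eq_mul_div, div_le_iff₀ hDt]
        nlinarith [hkey]
      have hb2 : x*(1-2*x)/(2*qq x) + (1/2 + qq x)*B ≤ 0 := by
        have h3 : (1/2 + qq x)*B ≤ x*(2*x-1)/(2*qq x) := by
          rw [le_div_iff₀ (by positivity)]
          nlinarith [hb1]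
        have h4 : x*(1-2*x)/(2*qq x) = -(x*(2*x-1)/(2*qq x)) := by ring
        rw [h4]; linarith
      have h5 : 0 ≤ x ^ (B-1) := Real.rpow_nonneg (by linarith) _
      exact mul_nonpos_of_nonneg_of_nonpos h5 hb2
  rcases le_total s t with h | h
  · exact hmono (Set.mem_Icc.2 ⟨hs1, h⟩) (Set.mem_Icc.2 ⟨ht1, le_refl t⟩) h
  · exact hanti (Set.mem_Icc.2 ⟨le_refl t, ht2.le⟩) (Set.mem_Icc.2 ⟨h, hs2⟩) h


theorem separable_bound_equal_split_optimal (n : ℕ) (hn : 1 ≤ n) (ω : ℝ)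
    (hω : ω ∈ Set.Icc (0 : ℝ) (1 - 1 / (2 : ℝ) ^ n))
    (t : ℝ) (ht : t = (1 - ω) ^ ((n : ℝ)⁻¹)) :
    -- t ∈ [1/2, 1]
    t ∈ Set.Icc (1 / 2 : ℝ) 1 ∧
    -- the product of per-party bounds is maximized by the equal split
    (∀ s : Fin n → ℝ, (∀ i, s i ∈ Set.Icc (1 / 2 : ℝ) 1) →
      1 - ω ≤ ∏ i, s i →
      ∏ i, (1 / 2 + Real.sqrt (s i * (1 - s i))) ≤
        (1 / 2 + Real.sqrt (t * (1 - t))) ^ n) ∧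
    -- the equal split s_i = t is feasible (it saturates the energy constraint) ...
    t ^ n = 1 - ω ∧
    -- ... and attains the bound, which equals pSep(ω,n)
    (∏ i : Fin n, (1 / 2 + Real.sqrt (t * (1 - t))) =
      (1 / 2 + Real.sqrt ((1 - ω) ^ ((n : ℝ)⁻¹)) *
        Real.sqrt (1 - (1 - ω) ^ ((n : ℝ)⁻¹))) ^ n) := by
  have hn0 : (n:ℝ) ≠ 0 := Nat.cast_ne_zero.2 (by omega)
  have hω0 : 0 ≤ ω := hω.1
  have hA' : (1/2:ℝ)^n = 1/2^n := by rw [div_pow, one_pow]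
  have hA : (1/2:ℝ)^n ≤ 1 - ω := by rw [hA']; linarith [hω.2]
  have hApos : (0:ℝ) < (1/2:ℝ)^n := by positivity
  have h1ω_pos : (0:ℝ) < 1 - ω := lt_of_lt_of_le hApos hA
  have h1ω_le1 : 1 - ω ≤ 1 := by linarith
  have ht1 : t ≤ 1 := by
    rw [ht]; exact Real.rpow_le_one h1ω_pos.le h1ω_le1 (by positivity)
  have ht_half : 1/2 ≤ t := by
    have h1 : ((1/2:ℝ)^n : ℝ) ^ ((n:ℝ)⁻¹) ≤ (1-ω) ^ ((n:ℝ)⁻¹) :=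
      Real.rpow_le_rpow (by positivity) hA (by positivity)
    have h2 : ((1/2:ℝ)^n : ℝ) ^ ((n:ℝ)⁻¹) = 1/2 := by
      rw [← Real.rpow_natCast (1/2:ℝ) n, ← Real.rpow_mul (by norm_num),
        mul_inv_cancel₀ hn0, Real.rpow_one]
    rw [ht]; rw [h2] at h1; exact h1
  have ht0 : (0:ℝ) < t := by linarith
  have ht_pow : t ^ n = 1 - ω := by
    rw [ht, ← Real.rpow_natCast ((1-ω) ^ ((n:ℝ)⁻¹)) n, ← Real.rpow_mul h1ω_pos.le,
      inv_mul_cancel₀ hn0, Real.rpow_one]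
  refine ⟨Set.mem_Icc.2 ⟨ht_half, ht1⟩, ?_, ht_pow, ?_⟩
  · -- main inequality
    intro s hs hprod
    rcases lt_or_eq_of_le ht1 with htlt | hteq
    · -- t < 1 : tangent-trick bound
      set B := bet t with hBdef
      have hB0 : 0 ≤ B := bet_nonneg ht_half
      have hsi_pos : ∀ i, (0:ℝ) < s i := fun i => lt_of_lt_of_le (by norm_num) (hs i).1
      set C : ℝ := (1/2 + Real.sqrt (t*(1-t))) * t ^ B with hC
      have hC0 : 0 ≤ C := by positivity
      have hstep : ∀ i, (1/2 + Real.sqrt (s i * (1 - s i))) ≤ C * (s i) ^ (-B) := by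
        intro i
        have h1 := onevar ht_half htlt (hs i).1 (hs i).2
        have h3 : (s i) ^ B * (s i) ^ (-B) = 1 := by
          rw [← Real.rpow_add (hsi_pos i)]; simp
        calc (1/2 + Real.sqrt (s i * (1 - s i)))
            = ((1/2 + Real.sqrt (s i * (1 - s i))) * (s i) ^ B) * (s i) ^ (-B) := by
              rw [mul_assoc, h3, mul_one]
          _ ≤ C * (s i) ^ (-B) :=
              mul_le_mul_of_nonneg_right h1 (Real.rpow_nonneg (hsi_pos i).le _)
      have hmain : ∏ i, (1/2 + Real.sqrt (s i * (1 - s i))) ≤ C ^ n * (∏ i, s i) ^ (-B) := by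
        calc ∏ i, (1/2 + Real.sqrt (s i * (1 - s i)))
            ≤ ∏ i, (C * (s i) ^ (-B)) :=
              Finset.prod_le_prod (fun i _ => by positivity) (fun i _ => hstep i)
          _ = C ^ n * ∏ i, (s i) ^ (-B) := by
              rw [Finset.prod_mul_distrib, Finset.prod_const, Finset.card_univ, Fintype.card_fin]
          _ = C ^ n * (∏ i, s i) ^ (-B) := by
              rw [Real.finset_prod_rpow _ _ (fun i _ => (hsi_pos i).le)]
      have h2 : (∏ i, s i) ^ (-B) ≤ ((t:ℝ)^n) ^ (-B) := by
        apply Real.rpow_le_rpow_of_nonpos (by positivity) _ (neg_nonpos.2 hB0)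
        rw [ht_pow]; exact hprod
      have h3 : (t ^ B) ^ n * ((t:ℝ)^n) ^ (-B) = 1 := by
        rw [← Real.rpow_natCast (t ^ B) n, ← Real.rpow_natCast t n,
          ← Real.rpow_mul ht0.le, ← Real.rpow_mul ht0.le, ← Real.rpow_add ht0]
        rw [show B * (n:ℝ) + (n:ℝ) * (-B) = 0 by ring, Real.rpow_zero]
      calc ∏ i, (1/2 + Real.sqrt (s i * (1 - s i)))
          ≤ C ^ n * (∏ i, s i) ^ (-B) := hmain
        _ ≤ C ^ n * ((t:ℝ)^n) ^ (-B) := mul_le_mul_of_nonneg_left h2 (by positivity)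
        _ = (1/2 + Real.sqrt (t*(1-t))) ^ n * ((t ^ B) ^ n * ((t:ℝ)^n) ^ (-B)) := by
            rw [hC, mul_pow]; ring
        _ = (1/2 + Real.sqrt (t*(1-t))) ^ n := by rw [h3, mul_one]
    · -- t = 1 : all s i = 1
      have hω1 : 1 - ω = 1 := by rw [← ht_pow, hteq, one_pow]
      have hall : ∀ i, s i = 1 := by
        intro i
        have h0 : ∀ j ∈ Finset.univ.erase i, (0:ℝ) ≤ s j :=
          fun j _ => le_trans (by norm_num) (hs j).1
        have h1 : ∏ j ∈ Finset.univ.erase i, s j ≤ 1 :=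
          Finset.prod_le_one h0 (fun j _ => (hs j).2)
        have h2 : ∏ j, s j = s i * ∏ j ∈ Finset.univ.erase i, s j :=
          (Finset.mul_prod_erase _ _ (Finset.mem_univ i)).symm
        have h3 := hprod
        rw [hω1, h2] at h3
        have hsi : (0:ℝ) ≤ s i := le_trans (by norm_num) (hs i).1
        have h4 : (1:ℝ) ≤ s i := by
          nlinarith [Finset.prod_nonneg h0]
        linarith [(hs i).2]
      have hL : ∏ i, (1/2 + Real.sqrt (s i * (1 - s i))) = (1/2:ℝ)^n := by
        rw [Finset.prod_congr rfl (fun i _ => by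
            rw [hall i, show (1:ℝ)*(1-1) = 0 by norm_num, Real.sqrt_zero, add_zero]),
          Finset.prod_const, Finset.card_univ, Fintype.card_fin]
      rw [hL, hteq, show (1:ℝ)*(1-1) = 0 by norm_num, Real.sqrt_zero, add_zero]
  · -- value of the product at the equal split
    rw [Finset.prod_const, Finset.card_univ, Fintype.card_fin,
      Real.sqrt_mul ht0.le, ht]
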